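/- Let (N_i) be a sequence of positive integers and (ε_i) a sequence with values in (0,1) such that N_{i+1} ≥ 2·N_i/ε_i for all i ≥ 1. Then there exists an irrational real number α such that the distance from N_i·α to the nearest integer is at most ε_i for every i ≥ 1. -/

import Mathlib

open Classical in
/-- Auxiliary integer sequence: `apxK N e i` is the numerator of the centre of the
`i`-th nested interval. Even-to-odd steps push the centre away from the rational
`e (i/2)`; odd-to-even steps jump to a grid point excluding that rational. -/
noncomputable def apxK (N : ℕ → ℕ) (e : ℕ → ℚ) : ℕ → ℤ
  | 0 => 0
  | (i+1) =>
    if i % 2 = 0 then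
      (if (1:ℝ)/2 ≤ |(e (i/2) : ℝ) * (N (i+1) : ℝ) -
          (⌊(apxK N e i : ℝ) * (N (i+1) : ℝ) / (N i : ℝ)⌋ : ℝ)| then
        ⌊(apxK N e i : ℝ) * (N (i+1) : ℝ) / (N i : ℝ)⌋
      else
        ⌊(apxK N e i : ℝ) * (N (i+1) : ℝ) / (N i : ℝ)⌋ + 1)
    else
      (if (apxK N e i : ℝ) * (N (i+1) : ℝ) / (N i : ℝ) ≤ (e (i/2) : ℝ) * (N (i+1) : ℝ) then
        ⌊(apxK N e i : ℝ) * (N (i+1) : ℝ) / (N i : ℝ)⌋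
      else
        ⌈(apxK N e i : ℝ) * (N (i+1) : ℝ) / (N i : ℝ)⌉)

open Classical in
lemma apxK_succ (N : ℕ → ℕ) (e : ℕ → ℚ) (i : ℕ) :
    apxK N e (i+1) =
    if i % 2 = 0 then
      (if (1:ℝ)/2 ≤ |(e (i/2) : ℝ) * (N (i+1) : ℝ) -
          (⌊(apxK N e i : ℝ) * (N (i+1) : ℝ) / (N i : ℝ)⌋ : ℝ)| then
        ⌊(apxK N e i : ℝ) * (N (i+1) : ℝ) / (N i : ℝ)⌋
      else
        ⌊(apxK N e i : ℝ) * (N (i+1) : ℝ) / (N i : ℝ)⌋ + 1)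
    else
      (if (apxK N e i : ℝ) * (N (i+1) : ℝ) / (N i : ℝ) ≤ (e (i/2) : ℝ) * (N (i+1) : ℝ) then
        ⌊(apxK N e i : ℝ) * (N (i+1) : ℝ) / (N i : ℝ)⌋
      else
        ⌈(apxK N e i : ℝ) * (N (i+1) : ℝ) / (N i : ℝ)⌉) := by
  rw [apxK]

theorem exists_irrational_good_approx (N : ℕ → ℕ) (ε : ℕ → ℝ)
    (hN : ∀ i, 0 < N i) (hε : ∀ i, ε i ∈ Set.Ioo (0 : ℝ) 1)
    (hrec : ∀ i, (N (i + 1) : ℝ) ≥ 2 * N i / ε i) :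
    ∃ α : ℝ, Irrational α ∧ ∀ i, |(N i : ℝ) * α - round ((N i : ℝ) * α)| ≤ ε i := by
  classical
  have hNpos : ∀ i, (0:ℝ) < N i := fun i => by exact_mod_cast hN i
  set e : ℕ → ℚ := fun n => (Denumerable.eqv ℚ).symm n with he
  set c : ℕ → ℝ := fun i => (apxK N e i : ℝ) / N i with hc
  set l : ℕ → ℝ := fun i => c i - ε i / N i with hl
  set u : ℕ → ℝ := fun i => c i + ε i / N i with hu
  -- basic inequality
  have hkey : ∀ i, (1:ℝ)/N (i+1) + ε (i+1)/N (i+1) ≤ ε i/N i := by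
    intro i
    have h1 := hrec i
    have h2 := (hε i).1
    have h3 := (hε (i+1)).2
    have hp := hNpos i
    have hp1 := hNpos (i+1)
    rw [ge_iff_le, div_le_iff₀ h2] at h1
    rw [← add_div, div_le_div_iff₀ hp1 hp]
    nlinarith
  have hC : ∀ i, ((apxK N e i : ℝ) * N (i+1) / N i) / N (i+1) = c i := by
    intro i
    have := (hNpos i).ne'
    have := (hNpos (i+1)).ne'
    simp only [hc]
    field_simp
  -- the new numerator is within 1 of the scaled old centre
  have hnear : ∀ i, |(apxK N e (i+1) : ℝ) - (apxK N e i : ℝ) * N (i+1) / N i| ≤ 1 := by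
    intro i
    have h1 := Int.floor_le ((apxK N e i : ℝ) * N (i+1) / N i)
    have h2 := Int.sub_one_lt_floor ((apxK N e i : ℝ) * N (i+1) / N i)
    have h3 := Int.le_ceil ((apxK N e i : ℝ) * N (i+1) / N i)
    have h4 := Int.ceil_lt_add_one ((apxK N e i : ℝ) * N (i+1) / N i)
    rw [apxK_succ]
    split_ifs <;> push_cast <;> rw [abs_le] <;> constructor <;> linarith
  have hstep : ∀ i, |c (i+1) - c i| ≤ ε i / N i - ε (i+1)/N (i+1) := by
    intro i
    have hp1 := hNpos (i+1)
    have h0 : c (i+1) - c i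
        = ((apxK N e (i+1) : ℝ) - (apxK N e i : ℝ) * N (i+1) / N i) / N (i+1) := by
      rw [sub_div, hC i]
    rw [h0, abs_div, abs_of_pos hp1, div_le_iff₀ hp1]
    have h2 := hkey i
    have h3 : (0:ℝ) < ε (i+1) / N (i+1) := div_pos (hε (i+1)).1 hp1
    calc |(apxK N e (i+1) : ℝ) - (apxK N e i : ℝ) * N (i+1) / N i| ≤ 1 := hnear i
      _ = (1 / N (i+1)) * N (i+1) := by field_simp
      _ ≤ (ε i / N i - ε (i+1)/N (i+1)) * N (i+1) := by
          apply mul_le_mul_of_nonneg_right _ hp1.le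
          linarith
  have hradpos : ∀ i, (0:ℝ) < ε i / N i := fun i => div_pos (hε i).1 (hNpos i)
  have hl_mono : Monotone l := by
    apply monotone_nat_of_le_succ
    intro i
    have h := abs_le.1 (hstep i)
    simp only [hl]
    linarith [h.1]
  have hu_anti : Antitone u := by
    apply antitone_nat_of_succ_le
    intro i
    have h := abs_le.1 (hstep i)
    simp only [hu]
    linarith [h.2]
  have hlu : ∀ i, l i ≤ u i := by
    intro i
    have := hradpos i
    simp only [hl, hu]
    linarith
  have hbdd : BddAbove (Set.range l) := by
    refine ⟨u 0, ?_⟩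
    rintro _ ⟨j, rfl⟩
    exact (hlu j).trans (hu_anti (Nat.zero_le j))
  set α : ℝ := ⨆ j, l j with hα
  have hαl : ∀ i, l i ≤ α := fun i => le_ciSup hbdd i
  have hαu : ∀ i, α ≤ u i := by
    intro i
    apply ciSup_le
    intro j
    rcases le_total i j with h | h
    · exact (hlu j).trans (hu_anti h)
    · exact (hl_mono h).trans (hlu i)
  have hmain : ∀ i, |(N i : ℝ) * α - apxK N e i| ≤ ε i := by
    intro i
    have hp := hNpos i
    have h1 := hαl i
    have h2 := hαu i
    simp only [hl, hu, hc] at h1 h2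
    rw [abs_le]
    constructor
    · have h1' : ((apxK N e i : ℝ) - ε i)/N i ≤ α := by rw [sub_div]; exact h1
      rw [div_le_iff₀ hp] at h1'
      nlinarith
    · have h2' : α ≤ ((apxK N e i : ℝ) + ε i)/N i := by rw [add_div]; exact h2
      rw [le_div_iff₀ hp] at h2'
      nlinarith
  -- step A property
  have hA : ∀ j, 1/(2 * (N (2*j+1) : ℝ)) ≤ |(e j : ℝ) - c (2*j+1)| := by
    intro j
    have hp1 := hNpos (2*j+1)
    have hmod : (2*j) % 2 = 0 := by omega
    have hdiv : (2*j) / 2 = j := by omega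
    have habs : (1:ℝ)/2 ≤ |(e j : ℝ) * N (2*j+1) - (apxK N e (2*j+1) : ℝ)| := by
      rw [apxK_succ, if_pos hmod, hdiv]
      split_ifs with h
      · exact h
      · push_neg at h
        have h' := abs_lt.1 h
        push_cast at h' ⊢
        rw [le_abs]
        right
        linarith [h'.2]
    have heq : |(e j : ℝ) - c (2*j+1)| * N (2*j+1)
        = |(e j : ℝ) * N (2*j+1) - (apxK N e (2*j+1) : ℝ)| := by
      rw [← abs_of_pos hp1, ← abs_mul]
      congr 1
      simp only [hc, abs_of_pos hp1]
      field_simp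
    rw [div_le_iff₀ (by positivity)]
    calc (1:ℝ) = 2 * (1/2) := by norm_num
      _ ≤ 2 * |(e j : ℝ) * N (2*j+1) - (apxK N e (2*j+1) : ℝ)| := by linarith
      _ = 2 * (|(e j : ℝ) - c (2*j+1)| * N (2*j+1)) := by rw [heq]
      _ = |(e j : ℝ) - c (2*j+1)| * (2 * N (2*j+1)) := by ring
  -- step B property
  have hB : ∀ j, ε (2*j+2) < |(e j : ℝ) * N (2*j+2) - (apxK N e (2*j+2) : ℝ)| := by
    intro j
    have hp := hNpos (2*j+1)
    have hp1 := hNpos (2*j+2)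
    have hdiv : (2*j+1) / 2 = j := by omega
    -- distance of the rational from the scaled centre
    have hdist : 1 < |(e j : ℝ) * N (2*j+2)
        - (apxK N e (2*j+1) : ℝ) * N (2*j+2) / N (2*j+1)| := by
      have h1 := hA j
      have heq : |(e j : ℝ) * N (2*j+2) - (apxK N e (2*j+1) : ℝ) * N (2*j+2) / N (2*j+1)|
          = |(e j : ℝ) - c (2*j+1)| * N (2*j+2) := by
        rw [← abs_of_pos hp1, ← abs_mul]
        congr 1
        simp only [hc, abs_of_pos hp1]
        field_simp
      rw [heq]
      have h2 : (1:ℝ)/(2 * N (2*j+1)) * N (2*j+2) ≤ |(e j : ℝ) - c (2*j+1)| * N (2*j+2) :=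
        mul_le_mul_of_nonneg_right h1 hp1.le
      refine lt_of_lt_of_le ?_ h2
      have hrec' := hrec (2*j+1)
      have hε1 := (hε (2*j+1)).1
      have hε2 := (hε (2*j+1)).2
      rw [ge_iff_le, div_le_iff₀ hε1] at hrec'
      rw [div_mul_eq_mul_div, lt_div_iff₀ (by positivity)]
      nlinarith
    have hfl := Int.floor_le ((apxK N e (2*j+1) : ℝ) * N (2*j+2) / N (2*j+1))
    have hce := Int.le_ceil ((apxK N e (2*j+1) : ℝ) * N (2*j+2) / N (2*j+1))
    have hε3 := (hε (2*j+2)).2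
    rw [show 2*j+2 = (2*j+1)+1 from rfl] at hdist hp1 hε3 ⊢
    rw [apxK_succ, if_neg (by omega), hdiv]
    split_ifs with h
    · have hgt : 1 < (e j : ℝ) * N ((2*j+1)+1)
          - (apxK N e (2*j+1) : ℝ) * N ((2*j+1)+1) / N (2*j+1) := by
        rcases lt_abs.1 hdist with h' | h'
        · exact h'
        · linarith
      rw [abs_of_pos (by push_cast; linarith)]
      push_cast
      linarith
    · push_neg at h
      have hgt : 1 < (apxK N e (2*j+1) : ℝ) * N ((2*j+1)+1) / N (2*j+1)
          - (e j : ℝ) * N ((2*j+1)+1) := by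
        rcases lt_abs.1 hdist with h' | h'
        · linarith
        · linarith
      rw [abs_sub_comm, abs_of_pos (by push_cast; linarith)]
      push_cast
      linarith
  have hne : ∀ q : ℚ, α ≠ (q : ℝ) := by
    intro q hq
    have hej : e ((Denumerable.eqv ℚ) q) = q := by simp [he]
    have h1 := hmain (2*((Denumerable.eqv ℚ) q)+2)
    have h2 := hB ((Denumerable.eqv ℚ) q)
    rw [hej] at h2
    rw [hq, mul_comm] at h1
    linarith
  refine ⟨α, ?_, ?_⟩
  · rintro ⟨q, hq⟩
    exact hne q hq.symm
  · intro i
    exact (round_le ((N i : ℝ) * α) (apxK N e i)).trans (hmain i)
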